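/- Let F ∈ ℬ_c(ℝ). Then for every Schwartz function φ : ℝ → ℂ, ∫_{−∞}^{∞} Ω_F(s)·φ″(s) ds = −∫_{−∞}^{∞} F(t)·(d/dt)[φ̂(t)] dt, where φ̂(t) = ∫_{−∞}^{∞} e^{−i·s·t} φ(s) ds. (That is, the definition of the Fourier transform of f = F′ as the second distributional derivative of Ω_F agrees with the Fourier transform of f as a tempered distribution: ⟨Ω_F″, φ⟩ = ⟨F′, φ̂⟩.) -/

import Mathlib

open MeasureTheory Filter Topology

noncomputable def v (s t : ℝ) : ℂ :=
  if t = 0 then (s:ℂ)^2/2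
  else (1 - Complex.I*(s:ℂ)*(t:ℂ) - Complex.exp (-Complex.I*(s:ℂ)*(t:ℂ)))/(t:ℂ)^2

noncomputable def vd (s t : ℝ) : ℂ :=
  if t = 0 then 0
  else (Complex.I*(s:ℂ)*Complex.exp (-Complex.I*(s:ℂ)*(t:ℂ)) - Complex.I*(s:ℂ))/(t:ℂ)^2
    - 2*(1 - Complex.I*(s:ℂ)*(t:ℂ) - Complex.exp (-Complex.I*(s:ℂ)*(t:ℂ)))/(t:ℂ)^3

def BcR (F : ℝ → ℂ) : Prop :=
  Continuous F ∧ Tendsto F atBot (𝓝 0) ∧ ∃ L : ℂ, Tendsto F atTop (𝓝 L)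

noncomputable def Om (F : ℝ → ℂ) (s : ℝ) : ℂ := -∫ t : ℝ, F t * vd s t

lemma exp_taylor2 {x : ℂ} (hx : ‖x‖ ≤ 1) :
    ‖Complex.exp x - (1 + x + x^2/2)‖ ≤ ‖x‖ ^ 3 * (2/9) := by
  have := Complex.exp_bound hx (n := 3) (by norm_num)
  have h2 : (Finset.range 3).sum (fun i => x ^ i / i.factorial) = 1 + x + x^2/2 := by
    rw [Finset.sum_range_succ, Finset.sum_range_succ, Finset.sum_range_succ]
    norm_num
  rw [h2] at this
  convert this using 2
  rw [Nat.factorial]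
  norm_num

noncomputable def NN (x : ℝ) : ℂ :=
  Complex.I*(x:ℂ)*Complex.exp (-Complex.I*(x:ℂ)) + 2*Complex.exp (-Complex.I*(x:ℂ))
    + Complex.I*(x:ℂ) - 2

lemma norm_exp_neg_I_mul (x : ℝ) : ‖Complex.exp (-Complex.I*(x:ℂ))‖ = 1 := by
  rw [Complex.norm_exp]
  simp [Complex.mul_re]

lemma NN_bound (x : ℝ) : ‖NN x‖ ≤ 6 * |x| * min (x^2) 1 := by
  rcases le_total (|x|) 1 with h | h
  · -- small case
    have hx2 : x^2 ≤ 1 := by nlinarith [abs_nonneg x, _root_.sq_abs x]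
    rw [min_eq_left hx2]
    have habs : ‖-Complex.I*(x:ℂ)‖ = |x| := by
      simp [map_mul, Complex.norm_real]
    have hR := exp_taylor2 (x := -Complex.I*(x:ℂ)) (by rw [habs]; exact h)
    rw [habs] at hR
    have hNN : NN x = (Complex.I*(x:ℂ) + 2) *
        (Complex.exp (-Complex.I*(x:ℂ)) - (1 + (-Complex.I*(x:ℂ)) + (-Complex.I*(x:ℂ))^2/2))
        - Complex.I*(x:ℂ)^3/2 := by
      simp only [NN]
      linear_combination (Complex.I * (x:ℂ)^3/2) * Complex.I_sq
    rw [hNN]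
    have h1 : ‖Complex.I*(x:ℂ) + 2‖ ≤ 3 := by
      calc ‖Complex.I*(x:ℂ) + 2‖ ≤ ‖Complex.I*(x:ℂ)‖ + ‖(2:ℂ)‖ := norm_add_le _ _
      _ = |x| + 2 := by simp
      _ ≤ 3 := by linarith
    calc ‖_ - Complex.I*(x:ℂ)^3/2‖ ≤ ‖(Complex.I*(x:ℂ) + 2) * _‖ + ‖Complex.I*(x:ℂ)^3/2‖ :=
          norm_sub_le _ _
    _ ≤ 3 * (|x|^3 * (2/9)) + |x|^3/2 := by
        gcongr
        · rw [norm_mul]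
          exact mul_le_mul h1 hR (norm_nonneg _) (by norm_num)
        · rw [norm_div, norm_mul, Complex.norm_I, one_mul]
          simp only [← Complex.ofReal_pow, Complex.norm_real, Real.norm_eq_abs, abs_pow]
          norm_num
    _ ≤ 6 * |x| * x^2 := by
        rw [show |x|^3 = |x| * x^2 by rw [← _root_.sq_abs x]; ring]
        nlinarith [abs_nonneg x, sq_nonneg x]
  · -- large case
    have hx2 : (1:ℝ) ≤ x^2 := by nlinarith [_root_.sq_abs x]
    rw [min_eq_right hx2]
    have e1 : ‖Complex.I*(x:ℂ)*Complex.exp (-Complex.I*(x:ℂ))‖ = |x| := by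
      rw [norm_mul, norm_exp_neg_I_mul]; simp
    have e3 : ‖Complex.I*(x:ℂ)‖ = |x| := by simp
    have e2 : ‖(2:ℂ)*Complex.exp (-Complex.I*(x:ℂ))‖ = 2 := by
      rw [norm_mul, norm_exp_neg_I_mul]; simp
    have hb : ‖NN x‖ ≤ 2*|x| + 4 := by
      simp only [NN]
      calc ‖_ - (2:ℂ)‖ ≤ ‖Complex.I*(x:ℂ)*Complex.exp (-Complex.I*(x:ℂ))
            + 2*Complex.exp (-Complex.I*(x:ℂ)) + Complex.I*(x:ℂ)‖ + ‖(2:ℂ)‖ := norm_sub_le _ _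
      _ ≤ (‖Complex.I*(x:ℂ)*Complex.exp (-Complex.I*(x:ℂ))
            + 2*Complex.exp (-Complex.I*(x:ℂ))‖ + ‖Complex.I*(x:ℂ)‖) + ‖(2:ℂ)‖ := by
            gcongr; exact norm_add_le _ _
      _ ≤ ((‖Complex.I*(x:ℂ)*Complex.exp (-Complex.I*(x:ℂ))‖
            + ‖(2:ℂ)*Complex.exp (-Complex.I*(x:ℂ))‖) + ‖Complex.I*(x:ℂ)‖) + ‖(2:ℂ)‖ := by
            gcongr; exact norm_add_le _ _
      _ ≤ 2*|x| + 4 := by rw [e1, e2, e3]; norm_num; linarith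
    calc ‖NN x‖ ≤ 2*|x| + 4 := hb
    _ ≤ 6 * |x| * 1 := by nlinarith [abs_nonneg x]

lemma vd_eq (s t : ℝ) (ht : t ≠ 0) : vd s t = NN (s*t) / (t:ℂ)^3 := by
  have ht' : (t:ℂ) ≠ 0 := Complex.ofReal_ne_zero.2 ht
  simp only [vd, NN, if_neg ht]
  push_cast
  field_simp
  ring

lemma min_le_frac (x : ℝ) : min (x^2) 1 ≤ 2 * x^2 / (1 + x^2) := by
  have h0 : (0:ℝ) < 1 + x^2 := by positivity
  rcases le_total (x^2) 1 with h | h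
  · rw [min_eq_left h, le_div_iff₀ h0]; nlinarith
  · rw [min_eq_right h, le_div_iff₀ h0]; nlinarith

lemma vd_bound (s t : ℝ) : ‖vd s t‖ ≤ 12 * |s|^3 / (1 + (s*t)^2) := by
  by_cases ht : t = 0
  · simp [vd, ht]
    try positivity
  · rw [vd_eq s t ht, norm_div]
    have h1 : ‖((t:ℂ))^3‖ = |t|^3 := by
      rw [norm_pow, Complex.norm_real, Real.norm_eq_abs]
    rw [h1, div_le_div_iff₀ (by positivity) (by positivity)]
    calc ‖NN (s*t)‖ * (1 + (s*t)^2) ≤ (6 * |s*t| * min ((s*t)^2) 1) * (1 + (s*t)^2) := by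
          exact mul_le_mul_of_nonneg_right (NN_bound _) (by positivity)
    _ ≤ (6 * |s*t| * (2 * (s*t)^2 / (1 + (s*t)^2))) * (1 + (s*t)^2) := by
          exact mul_le_mul_of_nonneg_right
            (mul_le_mul_of_nonneg_left (min_le_frac _) (by positivity)) (by positivity)
    _ = 12 * |s*t| * (s*t)^2 := by field_simp; ring
    _ = 12 * |s|^3 * |t|^3 := by
          rw [abs_mul, ← _root_.sq_abs (s*t), abs_mul]; ring
noncomputable def vd1 (s t : ℝ) : ℂ :=
  ((s:ℂ)*(t:ℂ)*Complex.exp (-Complex.I*(s:ℂ)*(t:ℂ)) + Complex.I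
    - Complex.I*Complex.exp (-Complex.I*(s:ℂ)*(t:ℂ)))/(t:ℂ)^2

noncomputable def vd2 (s t : ℝ) : ℂ := -Complex.I*(s:ℂ)*Complex.exp (-Complex.I*(s:ℂ)*(t:ℂ))

lemma hasDerivAt_E (s t : ℝ) :
    HasDerivAt (fun s : ℝ => Complex.exp (-Complex.I*(s:ℂ)*(t:ℂ)))
      (-Complex.I*(t:ℂ) * Complex.exp (-Complex.I*(s:ℂ)*(t:ℂ))) s := by
  have h : ∀ u : ℝ, Complex.exp (-Complex.I*(u:ℂ)*(t:ℂ)) = Complex.exp ((-Complex.I*(t:ℂ)) * (u:ℂ)) := by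
    intro u; ring_nf
  simp only [h]
  have hz : HasDerivAt (fun z : ℂ => Complex.exp ((-Complex.I*(t:ℂ)) * z))
      (Complex.exp ((-Complex.I*(t:ℂ)) * (s:ℂ)) * (-Complex.I*(t:ℂ))) (s:ℂ) := by
    simpa using ((hasDerivAt_id ((s:ℝ):ℂ)).const_mul (-Complex.I*(t:ℂ))).cexp
  have := hz.comp_ofReal
  convert this using 1
  ring

lemma hasDerivAt_ofReal' (s : ℝ) : HasDerivAt (fun s : ℝ => ((s:ℂ))) 1 s :=
  (hasDerivAt_id s).ofReal_comp

lemma hasDerivAt_vd (t : ℝ) (ht : t ≠ 0) (s : ℝ) :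
    HasDerivAt (fun s => vd s t) (vd1 s t) s := by
  have ht' : (t:ℂ) ≠ 0 := Complex.ofReal_ne_zero.2 ht
  have hvd : (fun s => vd s t) = fun s : ℝ =>
      (Complex.I*(s:ℂ)*Complex.exp (-Complex.I*(s:ℂ)*(t:ℂ)) - Complex.I*(s:ℂ))/(t:ℂ)^2
      - 2*(1 - Complex.I*(s:ℂ)*(t:ℂ) - Complex.exp (-Complex.I*(s:ℂ)*(t:ℂ)))/(t:ℂ)^3 := by
    funext u; simp [vd, ht]
  rw [hvd]
  have hE := hasDerivAt_E s t
  have h1 : HasDerivAt (fun s : ℝ => Complex.I*(s:ℂ)) Complex.I s := by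
    simpa using (hasDerivAt_ofReal' s).const_mul Complex.I
  have hA : HasDerivAt (fun s : ℝ => Complex.I*(s:ℂ)*Complex.exp (-Complex.I*(s:ℂ)*(t:ℂ)))
      (Complex.I * Complex.exp (-Complex.I*(s:ℂ)*(t:ℂ))
        + Complex.I*(s:ℂ) * (-Complex.I*(t:ℂ) * Complex.exp (-Complex.I*(s:ℂ)*(t:ℂ)))) s :=
    h1.mul hE
  have h2 : HasDerivAt (fun s : ℝ => Complex.I*(s:ℂ)*(t:ℂ)) (Complex.I*(t:ℂ)) s := by
    simpa using h1.mul_const ((t:ℂ))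
  have hB : HasDerivAt (fun s : ℝ => (1 : ℂ) - Complex.I*(s:ℂ)*(t:ℂ)
      - Complex.exp (-Complex.I*(s:ℂ)*(t:ℂ)))
      (-(Complex.I*(t:ℂ)) - (-Complex.I*(t:ℂ) * Complex.exp (-Complex.I*(s:ℂ)*(t:ℂ)))) s := by
    exact (((hasDerivAt_const s (1:ℂ)).sub h2).sub hE).congr_deriv (by ring)
  have := ((hA.sub h1).div_const ((t:ℂ)^2)).sub ((hB.const_mul 2).div_const ((t:ℂ)^3))
  refine this.congr_deriv (Eq.symm ?_)
  simp only [vd1]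
  field_simp
  ring_nf
  simp [Complex.I_sq]

lemma hasDerivAt_vd1 (t : ℝ) (ht : t ≠ 0) (s : ℝ) :
    HasDerivAt (fun s => vd1 s t) (vd2 s t) s := by
  have ht' : (t:ℂ) ≠ 0 := Complex.ofReal_ne_zero.2 ht
  have hE := hasDerivAt_E s t
  have h0 : HasDerivAt (fun s : ℝ => (s:ℂ)*(t:ℂ)) ((t:ℂ)) s := by
    simpa using (hasDerivAt_ofReal' s).mul_const ((t:ℂ))
  have hA : HasDerivAt (fun s : ℝ => (s:ℂ)*(t:ℂ)*Complex.exp (-Complex.I*(s:ℂ)*(t:ℂ)))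
      ((t:ℂ) * Complex.exp (-Complex.I*(s:ℂ)*(t:ℂ))
        + (s:ℂ)*(t:ℂ) * (-Complex.I*(t:ℂ) * Complex.exp (-Complex.I*(s:ℂ)*(t:ℂ)))) s :=
    h0.mul hE
  have := ((hA.add (hasDerivAt_const s Complex.I)).sub (hE.const_mul Complex.I)).div_const ((t:ℂ)^2)
  have h2 : (fun s => vd1 s t) = fun s : ℝ => ((s:ℂ)*(t:ℂ)*Complex.exp (-Complex.I*(s:ℂ)*(t:ℂ))
      + Complex.I - Complex.I*Complex.exp (-Complex.I*(s:ℂ)*(t:ℂ)))/(t:ℂ)^2 := by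
    funext u; simp [vd1]
  rw [h2]
  refine this.congr_deriv (Eq.symm ?_)
  simp only [vd2]
  field_simp
  ring_nf
  simp [Complex.I_sq]

lemma hasDerivAt_E' (s t : ℝ) :
    HasDerivAt (fun t : ℝ => Complex.exp (-Complex.I*(s:ℂ)*(t:ℂ)))
      (-Complex.I*(s:ℂ) * Complex.exp (-Complex.I*(s:ℂ)*(t:ℂ))) t := by
  have hz : HasDerivAt (fun z : ℂ => Complex.exp ((-Complex.I*(s:ℂ)) * z))
      (Complex.exp ((-Complex.I*(s:ℂ)) * (t:ℂ)) * (-Complex.I*(s:ℂ))) (t:ℂ) := by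
    simpa using ((hasDerivAt_id ((t:ℝ):ℂ)).const_mul (-Complex.I*(s:ℂ))).cexp
  have := hz.comp_ofReal
  convert this using 1
  ring

lemma norm_exp_E (s t : ℝ) : ‖Complex.exp (-Complex.I*(s:ℂ)*(t:ℂ))‖ = 1 := by
  rw [Complex.norm_exp]
  simp [Complex.mul_re]

lemma norm_vd2 (s t : ℝ) : ‖vd2 s t‖ = |s| := by
  simp only [vd2]
  rw [norm_mul, norm_exp_E, norm_mul]
  simp

lemma norm_vd1_le (s t : ℝ) : ‖vd1 s t‖ ≤ (|s| * |t| + 2)/t^2 := by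
  simp only [vd1]
  rw [norm_div]
  have h1 : ‖((t:ℂ))^2‖ = t^2 := by
    rw [norm_pow, Complex.norm_real, Real.norm_eq_abs, _root_.sq_abs]
  rw [h1]
  rcases eq_or_ne t 0 with rfl | ht
  · simp
  · have ht2 : (0:ℝ) < t^2 := by positivity
    apply div_le_div_of_nonneg_right ?_ ht2.le |>.trans_eq rfl
    calc ‖(s:ℂ)*(t:ℂ)*Complex.exp (-Complex.I*(s:ℂ)*(t:ℂ)) + Complex.I
          - Complex.I*Complex.exp (-Complex.I*(s:ℂ)*(t:ℂ))‖
        ≤ ‖(s:ℂ)*(t:ℂ)*Complex.exp (-Complex.I*(s:ℂ)*(t:ℂ)) + Complex.I‖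
          + ‖Complex.I*Complex.exp (-Complex.I*(s:ℂ)*(t:ℂ))‖ := norm_sub_le _ _
      _ ≤ (‖(s:ℂ)*(t:ℂ)*Complex.exp (-Complex.I*(s:ℂ)*(t:ℂ))‖ + ‖(Complex.I:ℂ)‖)
          + ‖Complex.I*Complex.exp (-Complex.I*(s:ℂ)*(t:ℂ))‖ := by
          gcongr; exact norm_add_le _ _
      _ ≤ |s| * |t| + 2 := by
          rw [norm_mul, norm_mul, norm_mul, norm_exp_E]
          simp [Complex.norm_real, Real.norm_eq_abs]
          linarith

lemma schwartz_mul_integrable (ψ : SchwartzMap ℝ ℂ) {g : ℝ → ℂ} (hg : Continuous g)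
    (c : ℝ) (k : ℕ) (hb : ∀ s : ℝ, ‖g s‖ ≤ c * (‖s‖^k + 1)) :
    Integrable (fun s => g s * ψ s) := by
  have h1 : Integrable (fun s : ℝ => c * (‖s‖^k * ‖ψ s‖) + c * ‖ψ s‖) :=
    ((ψ.integrable_pow_mul volume k).const_mul c).add ((ψ.integrable (μ := volume)).norm.const_mul c)
  apply h1.mono' (hg.mul ψ.continuous).aestronglyMeasurable
  filter_upwards with s
  rw [Pi.mul_apply, norm_mul]
  calc ‖g s‖ * ‖ψ s‖ ≤ (c * (‖s‖^k + 1)) * ‖ψ s‖ :=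
        mul_le_mul_of_nonneg_right (hb s) (norm_nonneg _)
  _ = c * (‖s‖^k * ‖ψ s‖) + c * ‖ψ s‖ := by ring

lemma cont_E (t : ℝ) : Continuous (fun s : ℝ => Complex.exp (-Complex.I*(s:ℂ)*(t:ℂ))) :=
  Complex.continuous_exp.comp (((continuous_const.mul Complex.continuous_ofReal).mul
    continuous_const))

lemma cont_vd2 (t : ℝ) : Continuous (fun s => vd2 s t) :=
  ((continuous_const.mul Complex.continuous_ofReal).mul (cont_E t))

lemma vd_bound' (s t : ℝ) : ‖vd s t‖ ≤ 12 * (‖s‖^3 + 1) := by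
  calc ‖vd s t‖ ≤ 12 * |s|^3 / (1 + (s*t)^2) := vd_bound s t
  _ ≤ 12 * |s|^3 := by
      apply div_le_self (by positivity)
      nlinarith [sq_nonneg (s*t)]
  _ ≤ 12 * (‖s‖^3 + 1) := by rw [Real.norm_eq_abs]; nlinarith [abs_nonneg s]

lemma vd1_bound' (s t : ℝ) (ht : t ≠ 0) : ‖vd1 s t‖ ≤ ((|t|+2)/t^2) * (‖s‖^1 + 1) := by
  have ht2 : (0:ℝ) < t^2 := by positivity
  calc ‖vd1 s t‖ ≤ (|s| * |t| + 2)/t^2 := norm_vd1_le s t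
  _ ≤ ((|t|+2) * (|s| + 1))/t^2 := by
      apply div_le_div_of_nonneg_right ?_ ht2.le
      nlinarith [abs_nonneg s, abs_nonneg t]
  _ = ((|t|+2)/t^2) * (‖s‖^1 + 1) := by rw [Real.norm_eq_abs, pow_one]; ring

lemma key (φ : SchwartzMap ℝ ℂ) {t : ℝ} (ht : t ≠ 0) :
    ∫ s : ℝ, vd s t * (SchwartzMap.derivCLM ℝ ℂ (SchwartzMap.derivCLM ℝ ℂ φ)) s
      = ∫ s : ℝ, vd2 s t * φ s := by
  set φ₁ := SchwartzMap.derivCLM ℝ ℂ φ with hφ₁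
  set φ₂ := SchwartzMap.derivCLM ℝ ℂ φ₁ with hφ₂
  have hcvd : Continuous (fun s => vd s t) := by
    rw [continuous_iff_continuousAt]
    exact fun s => (hasDerivAt_vd t ht s).continuousAt
  have hcvd1 : Continuous (fun s => vd1 s t) := by
    rw [continuous_iff_continuousAt]
    exact fun s => (hasDerivAt_vd1 t ht s).continuousAt
  have I1 : Integrable (fun s => vd s t * φ₂ s) :=
    schwartz_mul_integrable φ₂ hcvd 12 3 (fun s => vd_bound' s t)
  have I4 : Integrable (fun s => vd s t * φ₁ s) :=
    schwartz_mul_integrable φ₁ hcvd 12 3 (fun s => vd_bound' s t)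
  have I2 : Integrable (fun s => vd1 s t * φ₁ s) :=
    schwartz_mul_integrable φ₁ hcvd1 ((|t|+2)/t^2) 1 (fun s => vd1_bound' s t ht)
  have I6 : Integrable (fun s => vd1 s t * φ s) :=
    schwartz_mul_integrable φ hcvd1 ((|t|+2)/t^2) 1 (fun s => vd1_bound' s t ht)
  have I5 : Integrable (fun s => vd2 s t * φ s) := by
    apply schwartz_mul_integrable φ (cont_vd2 t) 1 1
    intro s
    rw [norm_vd2, Real.norm_eq_abs, pow_one, one_mul]
    linarith [abs_nonneg s]
  have hv1 : ∀ s, HasDerivAt (⇑φ₁) (φ₂ s) s := by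
    intro s
    have := φ₁.differentiableAt.hasDerivAt (𝕜 := ℝ) (x := s)
    rwa [show deriv (⇑φ₁) s = φ₂ s from (SchwartzMap.derivCLM_apply ℝ φ₁ s).symm] at this
  have hv : ∀ s, HasDerivAt (⇑φ) (φ₁ s) s := by
    intro s
    have := φ.differentiableAt.hasDerivAt (𝕜 := ℝ) (x := s)
    rwa [show deriv (⇑φ) s = φ₁ s from (SchwartzMap.derivCLM_apply ℝ φ s).symm] at this
  have step1 : ∫ s : ℝ, vd s t * φ₂ s = -∫ s : ℝ, vd1 s t * φ₁ s :=
    MeasureTheory.integral_mul_deriv_eq_deriv_mul_of_integrable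
      (fun x _ => hasDerivAt_vd t ht x) (fun x _ => hv1 x) I1 I2 I4
  have step2 : ∫ s : ℝ, vd1 s t * φ₁ s = -∫ s : ℝ, vd2 s t * φ s :=
    MeasureTheory.integral_mul_deriv_eq_deriv_mul_of_integrable
      (fun x _ => hasDerivAt_vd1 t ht x) (fun x _ => hv x) I2 I5 I6
  rw [step1, step2, neg_neg]

lemma cont_E' (s : ℝ) : Continuous (fun t : ℝ => Complex.exp (-Complex.I*(s:ℂ)*(t:ℂ))) :=
  Complex.continuous_exp.comp (continuous_const.mul Complex.continuous_ofReal)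

lemma hasDerivAt_fourierInt (φ : SchwartzMap ℝ ℂ) (t : ℝ) :
    HasDerivAt (fun t' : ℝ => ∫ s : ℝ, Complex.exp (-Complex.I*(s:ℂ)*(t':ℂ)) * φ s)
      (∫ s : ℝ, vd2 s t * φ s) t := by
  have hbint : Integrable (fun s : ℝ => |s| * ‖φ s‖) := by
    have := φ.integrable_pow_mul volume 1
    simpa [Real.norm_eq_abs] using this
  have h := hasDerivAt_integral_of_dominated_loc_of_deriv_le (𝕜 := ℝ) (μ := volume) (x₀ := t)
    (F := fun t' s => Complex.exp (-Complex.I*(s:ℂ)*(t':ℂ)) * φ s)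
    (F' := fun t' s => vd2 s t' * φ s)
    (bound := fun s => |s| * ‖φ s‖) (s := Metric.ball t 1) (Metric.ball_mem_nhds t one_pos)
    ?_ ?_ ?_ ?_ hbint ?_
  · exact h.2
  · filter_upwards with t'
    exact ((cont_E t').mul φ.continuous).aestronglyMeasurable
  · apply (φ.integrable (μ := volume)).norm.mono'
      ((cont_E t).mul φ.continuous).aestronglyMeasurable
    filter_upwards with s
    rw [Pi.mul_apply, norm_mul, norm_exp_E, one_mul]
  · exact ((cont_vd2 t).mul φ.continuous).aestronglyMeasurable
  · filter_upwards with s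
    intro t' _
    rw [norm_mul, norm_vd2]
  · filter_upwards with s
    intro t' _
    have := (hasDerivAt_E' s t').mul_const (φ s)
    simpa [vd2] using this

lemma F_bounded {F : ℝ → ℂ} (hc : Continuous F) (hbot : Tendsto F atBot (𝓝 0))
    {L : ℂ} (htop : Tendsto F atTop (𝓝 L)) : ∃ M : ℝ, 0 ≤ M ∧ ∀ t, ‖F t‖ ≤ M := by
  have h1 : ∀ᶠ t in atBot, ‖F t‖ ≤ 1 := by
    have := (hbot.norm).eventually (eventually_le_nhds (by norm_num : ‖(0:ℂ)‖ < 1))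
    exact this
  have h2 : ∀ᶠ t in atTop, ‖F t‖ ≤ ‖L‖ + 1 := by
    exact (htop.norm).eventually (eventually_le_nhds (by linarith [norm_nonneg L] : ‖L‖ < ‖L‖ + 1))
  obtain ⟨a, ha⟩ := eventually_atBot.1 h1
  obtain ⟨b, hb⟩ := eventually_atTop.1 h2
  obtain ⟨C, hC⟩ := (isCompact_Icc (a := a) (b := b)).exists_bound_of_continuousOn
    hc.continuousOn
  refine ⟨max (max 1 (‖L‖+1)) C ⊔ 0, le_max_right _ _, fun t => ?_⟩
  rcases le_total t a with h | h
  · exact (ha t h).trans (le_trans (le_max_left _ _) ((le_max_left _ _).trans (le_max_left _ _)))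
  rcases le_total b t with h' | h'
  · exact (hb t h').trans ((le_max_right 1 _).trans ((le_max_left _ C).trans (le_max_left _ 0)))
  · exact (hC t ⟨h, h'⟩).trans ((le_max_right _ C).trans (le_max_left _ 0))
lemma measurable_vd : Measurable (fun p : ℝ × ℝ => vd p.1 p.2) := by
  unfold vd
  apply Measurable.ite
  · exact measurable_snd (measurableSet_singleton (0:ℝ))
  · exact measurable_const
  · have h1 : Measurable (fun p : ℝ × ℝ => ((p.1:ℂ))) :=
      Complex.measurable_ofReal.comp measurable_fst
    have h2 : Measurable (fun p : ℝ × ℝ => ((p.2:ℂ))) :=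
      Complex.measurable_ofReal.comp measurable_snd
    have hE : Measurable (fun p : ℝ × ℝ => Complex.exp (-Complex.I*(p.1:ℂ)*(p.2:ℂ))) :=
      Complex.measurable_exp.comp (((measurable_const.mul h1).mul h2))
    apply Measurable.sub
    · exact (((measurable_const.mul h1).mul hE).sub (measurable_const.mul h1)).div (h2.pow_const 2)
    · exact (measurable_const.mul ((measurable_const.sub ((measurable_const.mul h1).mul h2)).sub hE)).div (h2.pow_const 3)

lemma vd_zero_left (t : ℝ) : vd 0 t = 0 := by
  rcases eq_or_ne t 0 with rfl | ht
  · simp [vd]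
  · simp [vd, ht]

lemma measurable_vd_right (s : ℝ) : Measurable (fun t => vd s t) :=
  measurable_vd.comp (measurable_const.prodMk measurable_id)

lemma integrable_slice {F : ℝ → ℂ} (hc : Continuous F) {M : ℝ} (hMb : ∀ t, ‖F t‖ ≤ M)
    (ψ : SchwartzMap ℝ ℂ) (s : ℝ) :
    Integrable (fun t => F t * vd s t * ψ s) := by
  rcases eq_or_ne s 0 with rfl | hs
  · simp only [vd_zero_left, mul_zero, zero_mul]
    exact integrable_zero _ _ _
  · have hbase : Integrable (fun t : ℝ => (1+(s*t)^2)⁻¹) := by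
      have := integrable_inv_one_add_sq.comp_mul_left' (R := s) hs
      simpa using this
    apply (hbase.const_mul (M * ‖ψ s‖ * (12*|s|^3))).mono'
    · exact ((hc.measurable.mul (measurable_vd_right s)).mul
        measurable_const).aestronglyMeasurable
    · filter_upwards with t
      rw [norm_mul, norm_mul]
      calc ‖F t‖ * ‖vd s t‖ * ‖ψ s‖ ≤ M * (12 * |s|^3 / (1 + (s*t)^2)) * ‖ψ s‖ := by
            apply mul_le_mul_of_nonneg_right ?_ (norm_nonneg _)
            exact mul_le_mul (hMb t) (vd_bound s t) (norm_nonneg _)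
              ((norm_nonneg (F t)).trans (hMb t))
      _ = M * ‖ψ s‖ * (12*|s|^3) * (1+(s*t)^2)⁻¹ := by
            rw [div_eq_mul_inv]; ring

lemma integrable_uncurry {F : ℝ → ℂ} (hc : Continuous F) {M : ℝ} (hM0 : 0 ≤ M)
    (hMb : ∀ t, ‖F t‖ ≤ M) (ψ : SchwartzMap ℝ ℂ) :
    Integrable (Function.uncurry (fun s t => F t * vd s t * ψ s))
      (volume.prod volume) := by
  have haesm : AEStronglyMeasurable (Function.uncurry (fun s t => F t * vd s t * ψ s))
      (volume.prod volume) := by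
    apply Measurable.aestronglyMeasurable
    exact ((hc.measurable.comp measurable_snd).mul measurable_vd).mul
      (ψ.continuous.measurable.comp measurable_fst)
  rw [MeasureTheory.integrable_prod_iff haesm]
  refine ⟨Eventually.of_forall fun s => integrable_slice hc hMb ψ s, ?_⟩
  apply Integrable.mono' (((ψ.integrable_pow_mul volume 2).const_mul (12*Real.pi*M)))
  · exact haesm.norm.integral_prod_right'
  · filter_upwards with s
    have hnn : 0 ≤ ∫ t, ‖F t * vd s t * ψ s‖ := integral_nonneg fun t => norm_nonneg _
    show |∫ t, ‖F t * vd s t * ψ s‖| ≤ _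
    rw [_root_.abs_of_nonneg hnn]
    rcases eq_or_ne s 0 with rfl | hs
    · simp only [vd_zero_left, mul_zero, zero_mul, norm_zero]
      simp only [integral_zero]
      positivity
    · have hbase : Integrable (fun t : ℝ => (1+(s*t)^2)⁻¹) := by
        have := integrable_inv_one_add_sq.comp_mul_left' (R := s) hs
        simpa using this
      have hmono : (∫ t, ‖F t * vd s t * ψ s‖)
          ≤ ∫ t : ℝ, (M * ‖ψ s‖ * (12*|s|^3)) * (1+(s*t)^2)⁻¹ := by
        apply integral_mono (integrable_slice hc hMb ψ s).norm
          (hbase.const_mul _)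
        intro t
        dsimp only
        rw [norm_mul, norm_mul]
        calc ‖F t‖ * ‖vd s t‖ * ‖ψ s‖ ≤ M * (12 * |s|^3 / (1 + (s*t)^2)) * ‖ψ s‖ := by
              apply mul_le_mul_of_nonneg_right ?_ (norm_nonneg _)
              exact mul_le_mul (hMb t) (vd_bound s t) (norm_nonneg _)
                ((norm_nonneg (F t)).trans (hMb t))
        _ = M * ‖ψ s‖ * (12*|s|^3) * (1+(s*t)^2)⁻¹ := by
              rw [div_eq_mul_inv]; ring
      have hval : ∫ t : ℝ, (1+(s*t)^2)⁻¹ = |s⁻¹| * Real.pi := by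
        have := MeasureTheory.Measure.integral_comp_mul_left (fun x : ℝ => (1+x^2)⁻¹) s
        rw [integral_univ_inv_one_add_sq] at this
        simpa [smul_eq_mul] using this
      calc (∫ t, ‖F t * vd s t * ψ s‖) ≤ (M * ‖ψ s‖ * (12*|s|^3)) * (|s⁻¹| * Real.pi) := by
            rw [← hval, ← MeasureTheory.integral_const_mul]
            exact hmono
      _ = 12*Real.pi*M * (|s|^2 * ‖ψ s‖) := by
            rw [abs_inv]
            have hs' : |s| ≠ 0 := abs_ne_zero.2 hs
            rw [show |s|^3 = s^2*|s| from by rw [← _root_.sq_abs s]; ring]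
            field_simp
            ring
            rw [_root_.sq_abs]
      _ = 12*Real.pi*M * (‖s‖^2 * ‖ψ s‖) := by rw [Real.norm_eq_abs]

theorem stmt9 (F : ℝ → ℂ) (hF : BcR F) (φ : SchwartzMap ℝ ℂ) :
    ∫ s : ℝ, Om F s * deriv (deriv (φ : ℝ → ℂ)) s
      = -∫ t : ℝ, F t *
          deriv (fun t' : ℝ => ∫ s : ℝ, Complex.exp (-Complex.I*(s:ℂ)*(t':ℂ)) * φ s) t := by
  obtain ⟨hc, hbot, L, htop⟩ := hF
  obtain ⟨M, hM0, hMb⟩ := F_bounded hc hbot htop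
  set φ₁ := SchwartzMap.derivCLM ℝ ℂ φ with hφ₁
  set φ₂ := SchwartzMap.derivCLM ℝ ℂ φ₁ with hφ₂
  have hd2 : deriv (deriv (φ : ℝ → ℂ)) = ⇑φ₂ := by
    funext s
    rw [show deriv (φ : ℝ → ℂ) = ⇑φ₁ from funext fun x => (SchwartzMap.derivCLM_apply ℝ φ x).symm]
    exact (SchwartzMap.derivCLM_apply ℝ φ₁ s).symm
  rw [hd2]
  have hint := integrable_uncurry hc hM0 hMb φ₂
  have hswap := MeasureTheory.integral_integral_swap hint
  have hne : ∀ᵐ t : ℝ, t ≠ 0 := by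
    rw [ae_iff]
    simp
  calc ∫ s : ℝ, Om F s * φ₂ s
      = ∫ s : ℝ, -∫ t : ℝ, F t * vd s t * φ₂ s := by
        apply integral_congr_ae
        filter_upwards with s
        rw [Om, neg_mul, ← MeasureTheory.integral_mul_const]
  _ = -∫ s : ℝ, ∫ t : ℝ, F t * vd s t * φ₂ s := by rw [integral_neg]
  _ = -∫ t : ℝ, ∫ s : ℝ, F t * vd s t * φ₂ s := by rw [hswap]
  _ = -∫ t : ℝ, F t *
        deriv (fun t' : ℝ => ∫ s : ℝ, Complex.exp (-Complex.I*(s:ℂ)*(t':ℂ)) * φ s) t := by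
      congr 1
      apply integral_congr_ae
      filter_upwards [hne] with t ht
      rw [show (∫ s : ℝ, F t * vd s t * φ₂ s) = ∫ s : ℝ, F t * (vd s t * φ₂ s) from by
        apply integral_congr_ae; filter_upwards with s; rw [mul_assoc]]
      rw [MeasureTheory.integral_const_mul, key φ ht, ← (hasDerivAt_fourierInt φ t).deriv]
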